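/- For every real t > 1, 1 + t⁻² − arccosh(t)/(t·√(t² − 1)) − t^(−2/3) > 0. -/

import Mathlib

open Real

noncomputable def arccosh (t : ℝ) : ℝ := Real.log (t + Real.sqrt (t ^ 2 - 1))

noncomputable def Faux (t : ℝ) : ℝ :=
    Real.sqrt (t ^ 2 - 1) * (t ^ 2 + 2) / (3 * t) - Real.log (t + Real.sqrt (t ^ 2 - 1))

lemma Faux_hasDeriv (t : ℝ) (ht : 1 < t) :
    HasDerivAt Faux (2 * (t ^ 2 - 1) ^ 2 / (3 * t ^ 2 * Real.sqrt (t ^ 2 - 1))) t := by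
  have ht0 : (0 : ℝ) < t := lt_trans one_pos ht
  have hs2 : (0 : ℝ) < t ^ 2 - 1 := by nlinarith
  have hs : 0 < Real.sqrt (t ^ 2 - 1) := Real.sqrt_pos.2 hs2
  have hss : Real.sqrt (t ^ 2 - 1) ^ 2 = t ^ 2 - 1 := Real.sq_sqrt hs2.le
  -- derivative of the sqrt part
  have h1 : HasDerivAt (fun x : ℝ => Real.sqrt (x ^ 2 - 1)) (t / Real.sqrt (t ^ 2 - 1)) t := by
    have hinner : HasDerivAt (fun x : ℝ => x ^ 2 - 1) (2 * t) t := by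
      simpa using (hasDerivAt_pow 2 t).sub_const (1 : ℝ)
    have : HasDerivAt (fun x : ℝ => Real.sqrt (x ^ 2 - 1)) (1 / (2 * Real.sqrt (t ^ 2 - 1)) * (2 * t)) t :=
      (Real.hasDerivAt_sqrt (ne_of_gt hs2)).comp t hinner
    convert this using 1
    field_simp
  have h2 : HasDerivAt (fun x : ℝ => x ^ 2 + 2) (2 * t) t := by
    simpa using (hasDerivAt_pow 2 t).add_const (2 : ℝ)
  have h3 : HasDerivAt (fun x : ℝ => (3 : ℝ) * x) 3 t := by
    simpa using (hasDerivAt_id t).const_mul (3 : ℝ)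
  have hnum : HasDerivAt (fun x : ℝ => Real.sqrt (x ^ 2 - 1) * (x ^ 2 + 2))
      (t / Real.sqrt (t ^ 2 - 1) * (t ^ 2 + 2) + Real.sqrt (t ^ 2 - 1) * (2 * t)) t :=
    h1.mul h2
  have hfrac : HasDerivAt (fun x : ℝ => Real.sqrt (x ^ 2 - 1) * (x ^ 2 + 2) / (3 * x))
      (((t / Real.sqrt (t ^ 2 - 1) * (t ^ 2 + 2) + Real.sqrt (t ^ 2 - 1) * (2 * t)) * (3 * t)
        - Real.sqrt (t ^ 2 - 1) * (t ^ 2 + 2) * 3) / (3 * t) ^ 2) t :=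
    hnum.div h3 (by positivity)
  have hlogin : HasDerivAt (fun x : ℝ => x + Real.sqrt (x ^ 2 - 1))
      (1 + t / Real.sqrt (t ^ 2 - 1)) t := (hasDerivAt_id t).add h1
  have hpos : 0 < t + Real.sqrt (t ^ 2 - 1) := by positivity
  have hlog : HasDerivAt (fun x : ℝ => Real.log (x + Real.sqrt (x ^ 2 - 1)))
      ((1 + t / Real.sqrt (t ^ 2 - 1)) / (t + Real.sqrt (t ^ 2 - 1))) t :=
    hlogin.log (ne_of_gt hpos)
  have hF : HasDerivAt Faux _ t := hfrac.sub hlog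
  convert hF using 1
  have h4 : (1 + t / Real.sqrt (t ^ 2 - 1)) / (t + Real.sqrt (t ^ 2 - 1))
      = 1 / Real.sqrt (t ^ 2 - 1) := by
    rw [div_eq_div_iff (ne_of_gt hpos) (ne_of_gt hs)]
    field_simp
    linarith [hss]
  rw [h4]
  set s := Real.sqrt (t ^ 2 - 1) with hsdef
  rw [← hss]
  field_simp
  linear_combination (2*s^2 + t^2) * hss

lemma Faux_mono : StrictMonoOn Faux (Set.Ici (1 : ℝ)) := by
  have hcont : ContinuousOn Faux (Set.Ici (1 : ℝ)) := by
    apply ContinuousOn.sub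
    · apply ContinuousOn.div
      · exact ((Real.continuous_sqrt.comp (by continuity)).mul (by continuity)).continuousOn
      · exact (continuous_const.mul continuous_id).continuousOn
      · intro x hx
        simp only [Set.mem_Ici] at hx
        positivity
    · apply ContinuousOn.log
      · exact (continuous_id.add (Real.continuous_sqrt.comp (by continuity))).continuousOn
      · intro x hx
        simp only [Set.mem_Ici] at hx
        have : 0 ≤ Real.sqrt (x ^ 2 - 1) := Real.sqrt_nonneg _
        linarith
  apply strictMonoOn_of_deriv_pos (convex_Ici 1) hcont
  intro x hx
  rw [interior_Ici] at hx
  have hx1 : 1 < x := hx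
  have hs2 : (0 : ℝ) < x ^ 2 - 1 := by nlinarith
  rw [(Faux_hasDeriv x hx1).deriv]
  have hs : 0 < Real.sqrt (x ^ 2 - 1) := Real.sqrt_pos.2 hs2
  positivity

lemma arccosh_lt (t : ℝ) (ht : 1 < t) :
    arccosh t < Real.sqrt (t ^ 2 - 1) * (t ^ 2 + 2) / (3 * t) := by
  have h := Faux_mono (Set.self_mem_Ici) (Set.mem_Ici.2 ht.le) ht
  have hF1 : Faux 1 = 0 := by
    simp [Faux]
  rw [hF1] at h
  unfold Faux at h
  unfold arccosh
  linarith

lemma cube_root_le (t : ℝ) (ht : 1 < t) :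
    t ^ (-(2 : ℝ) / 3) ≤ ((t ^ 2)⁻¹ + 2) / 3 := by
  have ht0 : (0 : ℝ) < t := lt_trans one_pos ht
  set u := t ^ (-(2 : ℝ) / 3) with hu
  have hu0 : 0 < u := Real.rpow_pos_of_pos ht0 _
  have hu3 : u ^ 3 = (t ^ 2)⁻¹ := by
    rw [hu, ← Real.rpow_natCast (t ^ (-(2 : ℝ) / 3)) 3, ← Real.rpow_mul ht0.le]
    norm_num
  have hv0 : (0 : ℝ) < (t ^ 2)⁻¹ := by positivity
  have hkey : u ^ 3 ≤ (((t ^ 2)⁻¹ + 2) / 3) ^ 3 := by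
    rw [hu3]
    nlinarith [sq_nonneg ((t ^ 2)⁻¹ - 1), hv0]
  have h3 : 0 ≤ ((t ^ 2)⁻¹ + 2) / 3 := by positivity
  exact le_of_pow_le_pow_left₀ (by norm_num) h3 hkey

theorem stmt_5 (t : ℝ) (ht : 1 < t) :
    1 + (t ^ 2)⁻¹ - arccosh t / (t * Real.sqrt (t ^ 2 - 1)) - t ^ (-(2 : ℝ) / 3) > 0 := by
  have ht0 : (0 : ℝ) < t := lt_trans one_pos ht
  have hs2 : (0 : ℝ) < t ^ 2 - 1 := by nlinarith
  have hs : 0 < Real.sqrt (t ^ 2 - 1) := Real.sqrt_pos.2 hs2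
  have hA : arccosh t / (t * Real.sqrt (t ^ 2 - 1)) < (t ^ 2 + 2) / (3 * t ^ 2) := by
    rw [div_lt_div_iff₀ (by positivity) (by positivity)]
    have h := arccosh_lt t ht
    rw [lt_div_iff₀ (by positivity : (0:ℝ) < 3 * t)] at h
    nlinarith [h, hs, ht0]
  have hB := cube_root_le t ht
  have hv0 : (0 : ℝ) < (t ^ 2)⁻¹ := by positivity
  have hveq : (t ^ 2 + 2) / (3 * t ^ 2) = (1 + 2 * (t ^ 2)⁻¹) / 3 := by
    rw [div_eq_div_iff (by positivity) (by norm_num : (3:ℝ) ≠ 0)]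
    field_simp
  rw [hveq] at hA
  linarith
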